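/- (Corollary 2.1, diffusion version of Theorem 2, end-to-end bound.) Let δ ∈ ℝ^{d×m} with Frobenius norm ‖δ‖₂ ≤ Δ, and suppose δWᵀ is symmetric positive semidefinite. Set δ_u = δUᵀe ∈ ℝ^d, Σ_δ = (I_d + (1/m)δWᵀ)^{−1}, and μ_δ = −(1/m)·Σ_δ·δ_u, and let σ₁ ≤ … ≤ σ_d be the eigenvalues of Σ_δ^{−1}. Let φ(x) = (2π)^{−d/2}·exp(−‖x‖²/2) be the standard Gaussian density and q_δ the N(μ_δ, Σ_δ) density. Then the Kullback–Leibler divergence satisfies ∫_{ℝ^d} φ(x)·log(φ(x)/q_δ(x)) dx ≤ ½·[ Σ_{i=1}^d (σ_i − log σ_i) − d + (σ_d/m²)·‖Uᵀe‖₂²·Δ² ]. -/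

import Mathlib

open Matrix
open scoped RealInnerProductSpace

/-- The covariance `Σ_δ = (I_d + (1/m)·δWᵀ)⁻¹`. -/
noncomputable def SigmaDelta (d m : ℕ) (W δ : Matrix (Fin d) (Fin m) ℝ) :
    Matrix (Fin d) (Fin d) ℝ :=
  (1 + (m : ℝ)⁻¹ • (δ * Wᵀ))⁻¹

/-- The shifted input `δ_u = δ Uᵀ e ∈ ℝ^d`. -/
noncomputable def deltaU (d m de : ℕ) (U : Matrix (Fin de) (Fin m) ℝ) (e : Fin de → ℝ)
    (δ : Matrix (Fin d) (Fin m) ℝ) : Fin d → ℝ :=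
  δ.mulVec (Uᵀ.mulVec e)

/-- The mean `μ_δ = −(1/m)·Σ_δ·δ_u ∈ ℝ^d`. -/
noncomputable def muDelta (d m de : ℕ) (W : Matrix (Fin d) (Fin m) ℝ)
    (U : Matrix (Fin de) (Fin m) ℝ) (e : Fin de → ℝ)
    (δ : Matrix (Fin d) (Fin m) ℝ) : EuclideanSpace ℝ (Fin d) :=
  -((m : ℝ)⁻¹ • ((WithLp.equiv 2 _).symm
      ((SigmaDelta d m W δ).mulVec (deltaU d m de U e δ)) : EuclideanSpace ℝ (Fin d)))

/-- The Frobenius norm `‖δ‖₂` of a matrix. -/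
noncomputable def frobNorm (d m : ℕ) (δ : Matrix (Fin d) (Fin m) ℝ) : ℝ :=
  Real.sqrt (∑ i, ∑ j, δ i j ^ 2)

/-- The standard Gaussian density `φ(x) = (2π)^{−d/2}·exp(−‖x‖²/2)` on `ℝ^d`. -/
noncomputable def stdGaussianDensity (d : ℕ) (x : EuclideanSpace ℝ (Fin d)) : ℝ :=
  (2 * Real.pi) ^ (-(d : ℝ) / 2) * Real.exp (-‖x‖ ^ 2 / 2)

/-- The Gaussian density `N(μ,Σ)(x) = (2π)^{−d/2}·(det Σ)^{−1/2}·exp(−½(x−μ)ᵀΣ⁻¹(x−μ))`. -/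
noncomputable def gaussianDensity (d : ℕ) (μ : EuclideanSpace ℝ (Fin d))
    (S : Matrix (Fin d) (Fin d) ℝ) (x : EuclideanSpace ℝ (Fin d)) : ℝ :=
  (2 * Real.pi) ^ (-(d : ℝ) / 2) * S.det ^ (-(1 : ℝ) / 2) *
    Real.exp (-(1 / 2) * ⟪x - μ, ((WithLp.equiv 2 _).symm (S⁻¹.mulVec (x - μ)) :
      EuclideanSpace ℝ (Fin d))⟫)

open MeasureTheory Real Matrix Filter Set

namespace Corollary21Aux


noncomputable def stdg (t : ℝ) : ℝ := (2 * π) ^ (-(1:ℝ)/2) * Real.exp (-t^2/2)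

lemma stdg_eq (t : ℝ) : stdg t = (2 * π) ^ (-(1:ℝ)/2) * Real.exp (-(1/2) * t^2) := by
  unfold stdg; ring_nf

lemma integrable_stdg : Integrable stdg := by
  simp only [funext stdg_eq]
  exact (integrable_exp_neg_mul_sq (by norm_num : (0:ℝ) < 1/2)).const_mul _

lemma integrable_mul_stdg : Integrable (fun t => t * stdg t) := by
  have h := (integrable_mul_exp_neg_mul_sq (by norm_num : (0:ℝ) < 1/2)).const_mul
    ((2 * π) ^ (-(1:ℝ)/2))
  convert h using 2 with t
  rw [stdg_eq]; ring

lemma integrable_sq_mul_stdg : Integrable (fun t => t^2 * stdg t) := by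
  have h := (integrable_rpow_mul_exp_neg_mul_sq (by norm_num : (0:ℝ) < 1/2)
    (s := ((2:ℕ):ℝ)) (by norm_num)).const_mul ((2 * π) ^ (-(1:ℝ)/2))
  convert h using 2 with t
  rw [stdg_eq, Real.rpow_natCast]; ring

lemma integrable_poly_mul_stdg (a b c : ℝ) :
    Integrable (fun t => (a * t^2 + b * t + c) * stdg t) := by
  have := ((integrable_sq_mul_stdg.const_mul a).add (integrable_mul_stdg.const_mul b)).add
    (integrable_stdg.const_mul c)
  refine this.congr (Filter.Eventually.of_forall fun t => ?_)
  simp only [Pi.add_apply]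
  ring

lemma integral_stdg : ∫ t, stdg t = 1 := by
  simp only [funext stdg_eq]
  rw [MeasureTheory.integral_const_mul, integral_gaussian]
  have h2 : π / (1/2) = 2 * π := by ring
  have hpos : (0:ℝ) < 2 * π := by positivity
  rw [h2, Real.sqrt_eq_rpow, ← Real.rpow_add hpos]
  norm_num

lemma integral_mul_stdg : ∫ t, t * stdg t = 0 := by
  have h : ∫ t, t * stdg t = ∫ t, -t * stdg (-t) := by
    rw [← MeasureTheory.integral_neg_eq_self (fun t => t * stdg t)]
  have h2 : ∀ t, -t * stdg (-t) = -(t * stdg t) := by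
    intro t; unfold stdg; rw [neg_pow]; ring_nf
  rw [funext h2, integral_neg] at h
  linarith


lemma tendsto_mul_gauss_atTop : Filter.Tendsto (fun t : ℝ => t * Real.exp (-(1/2) * t^2))
    Filter.atTop (nhds 0) := by
  have hlim : Filter.Tendsto (fun x : ℝ => Real.exp (-(1/2) * x)) Filter.atTop (nhds 0) := by
    have := Real.tendsto_exp_neg_atTop_nhds_zero.comp
      (Filter.tendsto_id.const_mul_atTop (by norm_num : (0:ℝ) < 1/2))
    convert this using 2 with x
    simp [Function.comp]
  have h := ((rpow_mul_exp_neg_mul_sq_isLittleO_exp_neg (by norm_num : (0:ℝ) < 1/2)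
      1).isBigO.trans_tendsto hlim)
  convert h using 2 with t
  rw [Real.rpow_one]

lemma hasDerivAt_gauss_aux (t : ℝ) :
    HasDerivAt (fun t : ℝ => -t * Real.exp (-(1/2) * t^2))
      ((t^2 - 1) * Real.exp (-(1/2) * t^2)) t := by
  have h1 : HasDerivAt (fun t : ℝ => -(1/2) * t^2) (-t) t := by
    have := (hasDerivAt_pow 2 t).const_mul (-(1/2):ℝ)
    refine this.congr_deriv ?_
    push_cast; ring
  have h2 : HasDerivAt (fun t : ℝ => Real.exp (-(1/2) * t^2))
      (Real.exp (-(1/2) * t^2) * (-t)) t := h1.exp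
  have h3 := (hasDerivAt_neg t).mul h2
  refine h3.congr_deriv ?_
  ring

lemma integrableOn_aux (s : Set ℝ) :
    IntegrableOn (fun t : ℝ => (t^2 - 1) * Real.exp (-(1/2) * t^2)) s := by
  apply Integrable.integrableOn
  have h1 : Integrable (fun t : ℝ => t^2 * Real.exp (-(1/2) * t^2)) := by
    have h := integrable_rpow_mul_exp_neg_mul_sq (by norm_num : (0:ℝ) < 1/2)
      (s := ((2:ℕ):ℝ)) (by norm_num)
    convert h using 2 with t
    rw [Real.rpow_natCast]
  have h2 := integrable_exp_neg_mul_sq (by norm_num : (0:ℝ) < 1/2)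
  convert h1.sub h2 using 1
  funext t; simp only [Pi.sub_apply]; ring

lemma integral_sq_gauss : ∫ t : ℝ, t^2 * Real.exp (-(1/2) * t^2) = Real.sqrt (2 * π) := by
  have key : ∫ t : ℝ, (t^2 - 1) * Real.exp (-(1/2) * t^2) = 0 := by
    have hIoi : ∫ t in Ioi (0:ℝ), (t^2 - 1) * Real.exp (-(1/2) * t^2) = 0 := by
      have := integral_Ioi_of_hasDerivAt_of_tendsto' (a := 0)
        (fun x _ => hasDerivAt_gauss_aux x) ((integrableOn_aux _)) (by simpa [neg_mul] using tendsto_mul_gauss_atTop.neg)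
      simpa using this
    have hIic : ∫ t in Iic (0:ℝ), (t^2 - 1) * Real.exp (-(1/2) * t^2) = 0 := by
      have hbot : Filter.Tendsto (fun t : ℝ => -t * Real.exp (-(1/2) * t^2))
          Filter.atBot (nhds 0) := by
        have := tendsto_mul_gauss_atTop.comp Filter.tendsto_neg_atBot_atTop
        convert this using 2 with t
        simp [Function.comp]
      have := integral_Iic_of_hasDerivAt_of_tendsto' (a := 0)
        (fun x _ => hasDerivAt_gauss_aux x) ((integrableOn_aux _)) hbot
      simpa using this
    rw [← intervalIntegral.integral_Iic_add_Ioi (b := (0:ℝ))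
      (integrableOn_aux _) (integrableOn_aux _), hIoi, hIic]
    norm_num
  have h1 : Integrable (fun t : ℝ => t^2 * Real.exp (-(1/2) * t^2)) := by
    have h := integrable_rpow_mul_exp_neg_mul_sq (by norm_num : (0:ℝ) < 1/2)
      (s := ((2:ℕ):ℝ)) (by norm_num)
    convert h using 2 with t
    rw [Real.rpow_natCast]
  have h2 := integrable_exp_neg_mul_sq (by norm_num : (0:ℝ) < 1/2)
  have hsplit : ∫ t : ℝ, (t^2 - 1) * Real.exp (-(1/2) * t^2)
      = (∫ t : ℝ, t^2 * Real.exp (-(1/2) * t^2)) - ∫ t : ℝ, Real.exp (-(1/2) * t^2) := by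
    rw [← MeasureTheory.integral_sub h1 h2]
    congr 1; funext t; ring
  have hg : ∫ t : ℝ, Real.exp (-(1/2) * t^2) = Real.sqrt (2 * π) := by
    rw [integral_gaussian]
    congr 1; ring
  rw [key, hg] at hsplit
  linarith



lemma integral_sq_stdg : ∫ t, t^2 * stdg t = 1 := by
  have h : (fun t : ℝ => t^2 * stdg t)
      = fun t : ℝ => (2 * π) ^ (-(1:ℝ)/2) * (t^2 * Real.exp (-(1/2) * t^2)) := by
    funext t; rw [stdg_eq]; ring
  rw [h, MeasureTheory.integral_const_mul, integral_sq_gauss]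
  have hpos : (0:ℝ) < 2 * π := by positivity
  rw [Real.sqrt_eq_rpow, ← Real.rpow_add hpos]
  norm_num

lemma integrable_linear_mul_stdg (a : ℝ) : Integrable (fun t => (t - a) * stdg t) := by
  have := integrable_poly_mul_stdg 0 1 (-a)
  convert this using 2 with t; ring

lemma integrable_quad_mul_stdg (a b : ℝ) :
    Integrable (fun t => ((t - a) * (t - b)) * stdg t) := by
  have := integrable_poly_mul_stdg 1 (-(a+b)) (a*b)
  convert this using 2 with t; ring

lemma integrable_sq_mul_stdg' : Integrable (fun t => t^2 * stdg t) := by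
  have := integrable_poly_mul_stdg 1 0 0
  convert this using 2 with t; ring

lemma integral_linear_mul_stdg (a : ℝ) : ∫ t, (t - a) * stdg t = -a := by
  have h : (fun t => (t - a) * stdg t) = fun t => t * stdg t + (-a) * stdg t := by
    funext t; ring
  rw [h, integral_add (by simpa using integrable_poly_mul_stdg 0 1 0)
    (integrable_stdg.const_mul _), integral_mul_stdg, MeasureTheory.integral_const_mul,
    integral_stdg]
  ring

lemma integral_quad_mul_stdg (a b : ℝ) :
    ∫ t, ((t - a) * (t - b)) * stdg t = 1 + a * b := by
  have h : (fun t => ((t - a) * (t - b)) * stdg t)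
      = fun t => t^2 * stdg t + ((-(a+b)) * (t * stdg t) + (a*b) * stdg t) := by
    funext t; ring
  rw [h, integral_add integrable_sq_mul_stdg', integral_sq_stdg,
    integral_add, MeasureTheory.integral_const_mul, MeasureTheory.integral_const_mul,
    integral_mul_stdg, integral_stdg]
  · ring
  · exact (by simpa using integrable_poly_mul_stdg 0 1 0 : Integrable (fun t => t * stdg t)).const_mul _
  · exact integrable_stdg.const_mul _
  · exact Integrable.add
      ((by simpa using integrable_poly_mul_stdg 0 1 0 : Integrable (fun t => t * stdg t)).const_mul _)
      (integrable_stdg.const_mul _)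

section Pi
variable {d : ℕ}

/-- 1-D factor used for the (i,j) quadratic moment. -/
noncomputable def Hfac (μv : Fin d → ℝ) (i j k : Fin d) : ℝ → ℝ :=
  fun t => ((if k = i then t - μv i else 1) * (if k = j then t - μv j else 1)) * stdg t

lemma integrable_Hfac (μv : Fin d → ℝ) (i j k : Fin d) : Integrable (Hfac μv i j k) := by
  unfold Hfac
  by_cases hi : k = i
  · subst hi
    by_cases hj : k = j
    · subst hj
      simp only [if_pos rfl]
      exact integrable_quad_mul_stdg _ _
    · simp only [if_pos rfl, if_neg hj, mul_one]
      exact integrable_linear_mul_stdg _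
  · by_cases hj : k = j
    · subst hj
      simp only [if_neg hi, if_pos rfl, one_mul]
      exact integrable_linear_mul_stdg _
    · simp only [if_neg hi, if_neg hj, one_mul]
      simpa using integrable_stdg

lemma prod_Hfac (μv : Fin d → ℝ) (i j : Fin d) (x : Fin d → ℝ) :
    ∏ k, Hfac μv i j k (x k) = (∏ k, stdg (x k)) * ((x i - μv i) * (x j - μv j)) := by
  unfold Hfac
  rw [Finset.prod_mul_distrib, Finset.prod_mul_distrib]
  rw [Finset.prod_ite_eq' Finset.univ i (fun k => x k - μv i),
    Finset.prod_ite_eq' Finset.univ j (fun k => x k - μv j)]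
  simp
  ring

lemma integral_prod_Hfac (μv : Fin d → ℝ) (i j : Fin d) :
    ∫ x : Fin d → ℝ, ∏ k, Hfac μv i j k (x k)
      = μv i * μv j + if i = j then 1 else 0 := by
  rw [MeasureTheory.integral_fintype_prod_volume_eq_prod (f := fun k => Hfac μv i j k)]
  rcases eq_or_ne i j with rfl | hij
  · have hfun : ∀ k, (∫ t, Hfac μv i i k t)
        = if k = i then 1 + μv i * μv i else 1 := by
      intro k
      by_cases hk : k = i
      · subst hk
        simp only [Hfac, ite_true, if_pos rfl]
        exact integral_quad_mul_stdg _ _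
      · simp only [Hfac, if_neg hk, ite_false, one_mul, if_neg hk]
        exact integral_stdg
    rw [Finset.prod_congr rfl (fun k _ => hfun k), Finset.prod_ite_eq' Finset.univ i
      (fun _ => 1 + μv i * μv i)]
    simp [add_comm]
  · have hfun : ∀ k, (∫ t, Hfac μv i j k t)
        = (if k = i then -μv i else 1) * (if k = j then -μv j else 1) := by
      intro k
      by_cases hk : k = i
      · subst hk
        simp only [Hfac, if_pos rfl, if_neg hij, ite_true, ite_false, mul_one]
        exact integral_linear_mul_stdg _
      · by_cases hk2 : k = j
        · subst hk2
          simp only [Hfac, if_neg hk, if_pos rfl, ite_true, ite_false, one_mul]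
          exact integral_linear_mul_stdg _
        · simp only [Hfac, if_neg hk, if_neg hk2, one_mul, mul_one]
          exact integral_stdg
    rw [Finset.prod_congr rfl (fun k _ => hfun k), Finset.prod_mul_distrib,
      Finset.prod_ite_eq' Finset.univ i (fun _ => -μv i),
      Finset.prod_ite_eq' Finset.univ j (fun _ => -μv j)]
    simp [if_neg hij]
end Pi


lemma key_integral (d : ℕ) (A : Matrix (Fin d) (Fin d) ℝ) (μv : Fin d → ℝ) (c : ℝ) :
    ∫ x : Fin d → ℝ, (∏ k, stdg (x k)) *
      (c + (1/2) * (∑ i, ∑ j, A i j * ((x i - μv i) * (x j - μv j))) - (1/2) * ∑ i, (x i)^2)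
    = c + (1/2) * (∑ i, ∑ j, A i j * (μv i * μv j + if i = j then 1 else 0)) - (1/2) * d := by
  have pull : ∀ (G r : ℝ) (f : Fin d → ℝ), G * (r * ∑ i, f i) = ∑ i, (G * r) * f i := by
    intro G r f
    rw [Finset.mul_sum, Finset.mul_sum]
    exact Finset.sum_congr rfl (fun i _ => by ring)
  have hfun : (fun x : Fin d → ℝ => (∏ k, stdg (x k)) *
      (c + (1/2) * (∑ i, ∑ j, A i j * ((x i - μv i) * (x j - μv j))) - (1/2) * ∑ i, (x i)^2))
      = fun x => (c * ∏ k, stdg (x k)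
        + ∑ i, ∑ j, (A i j * (1/2)) * (∏ k, Hfac μv i j k (x k)))
        + ∑ i, (-(1/2)) * (∏ k, Hfac (fun _ => (0:ℝ)) i i k (x k)) := by
    funext x
    set G := ∏ k, stdg (x k) with hG
    simp only [prod_Hfac, sub_zero]
    have e1 : ∑ i, ∑ j, (A i j * (1/2)) * (G * ((x i - μv i) * (x j - μv j)))
        = G * ((1/2) * ∑ i, ∑ j, A i j * ((x i - μv i) * (x j - μv j))) := by
      rw [pull]
      refine Finset.sum_congr rfl (fun i _ => ?_)
      rw [Finset.mul_sum]
      exact Finset.sum_congr rfl (fun j _ => by ring)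
    have e2 : ∑ i, (-(1/2)) * (G * ((x i) * (x i)))
        = -(G * ((1/2) * ∑ i, (x i)^2)) := by
      rw [pull, ← Finset.sum_neg_distrib]
      exact Finset.sum_congr rfl (fun i _ => by ring)
    rw [e1, e2]
    ring
  rw [hfun]
  have intG : Integrable (fun x : Fin d → ℝ => ∏ k, stdg (x k)) :=
    Integrable.fintype_prod (f := fun _ => stdg) (fun _ => integrable_stdg)
  have intP : ∀ (μw : Fin d → ℝ) (i j : Fin d),
      Integrable (fun x : Fin d → ℝ => ∏ k, Hfac μw i j k (x k)) :=
    fun μw i j => Integrable.fintype_prod (f := fun k => Hfac μw i j k)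
      (fun k => integrable_Hfac μw i j k)
  have int2 : Integrable (fun x : Fin d → ℝ =>
      ∑ i, ∑ j, (A i j * (1/2)) * (∏ k, Hfac μv i j k (x k))) :=
    integrable_finset_sum _ (fun i _ => integrable_finset_sum _
      (fun j _ => (intP μv i j).const_mul _))
  have int3 : Integrable (fun x : Fin d → ℝ =>
      ∑ i, (-(1/2) : ℝ) * (∏ k, Hfac (fun _ => (0:ℝ)) i i k (x k))) :=
    integrable_finset_sum _ (fun i _ => (intP _ i i).const_mul _)
  have step1 : ∫ x : Fin d → ℝ, ((c * ∏ k, stdg (x k)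
        + ∑ i, ∑ j, (A i j * (1/2)) * (∏ k, Hfac μv i j k (x k)))
        + ∑ i, (-(1/2) : ℝ) * (∏ k, Hfac (fun _ => (0:ℝ)) i i k (x k)))
      = (∫ x : Fin d → ℝ, (c * ∏ k, stdg (x k)
        + ∑ i, ∑ j, (A i j * (1/2)) * (∏ k, Hfac μv i j k (x k))))
      + ∫ x : Fin d → ℝ, ∑ i, (-(1/2) : ℝ) * (∏ k, Hfac (fun _ => (0:ℝ)) i i k (x k)) :=
    integral_add ((intG.const_mul c).add int2) int3
  have step2 : ∫ x : Fin d → ℝ, (c * ∏ k, stdg (x k)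
        + ∑ i, ∑ j, (A i j * (1/2)) * (∏ k, Hfac μv i j k (x k)))
      = (∫ x : Fin d → ℝ, c * ∏ k, stdg (x k))
      + ∫ x : Fin d → ℝ, ∑ i, ∑ j, (A i j * (1/2)) * (∏ k, Hfac μv i j k (x k)) :=
    integral_add (intG.const_mul c) int2
  rw [step1, step2,
    MeasureTheory.integral_const_mul,
    MeasureTheory.integral_finset_sum _ (fun i _ => integrable_finset_sum _
      (fun j _ => (intP μv i j).const_mul _)),
    MeasureTheory.integral_finset_sum _ (fun i _ => (intP _ i i).const_mul _)]
  have hGval : ∫ x : Fin d → ℝ, ∏ k, stdg (x k) = 1 := by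
    rw [MeasureTheory.integral_fintype_prod_volume_eq_prod (f := fun _ => stdg)]
    simp [integral_stdg]
  have hval2 : ∑ i, ∫ x : Fin d → ℝ, ∑ j, (A i j * (1/2)) * (∏ k, Hfac μv i j k (x k))
      = (1/2) * ∑ i, ∑ j, A i j * (μv i * μv j + if i = j then 1 else 0) := by
    rw [Finset.mul_sum]
    refine Finset.sum_congr rfl (fun i _ => ?_)
    rw [MeasureTheory.integral_finset_sum _ (fun j _ => (intP μv i j).const_mul _),
      Finset.mul_sum]
    refine Finset.sum_congr rfl (fun j _ => ?_)
    rw [MeasureTheory.integral_const_mul, integral_prod_Hfac]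
    ring
  have hval3 : ∑ i, ∫ x : Fin d → ℝ, (-(1/2) : ℝ) * (∏ k, Hfac (fun _ => (0:ℝ)) i i k (x k))
      = -(1/2) * d := by
    have : ∀ i : Fin d, ∫ x : Fin d → ℝ,
        (-(1/2) : ℝ) * (∏ k, Hfac (fun _ => (0:ℝ)) i i k (x k)) = -(1/2) := by
      intro i
      rw [MeasureTheory.integral_const_mul, integral_prod_Hfac]
      simp
    rw [Finset.sum_congr rfl (fun i _ => this i), Finset.sum_const, Finset.card_univ]
    simp
    ring
  rw [hGval, hval2, hval3]
  ring


variable {d : ℕ}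

lemma trace_eq_sum_eigenvalues {M : Matrix (Fin d) (Fin d) ℝ} (hM : M.IsHermitian) :
    M.trace = ∑ i, hM.eigenvalues i := by
  simpa using hM.trace_eq_sum_eigenvalues

lemma eigenvalue_ge_one {M : Matrix (Fin d) (Fin d) ℝ} (hM : M.IsHermitian)
    (P : Matrix (Fin d) (Fin d) ℝ) (hP : P.PosSemidef) (hMP : M = 1 + P) (i : Fin d) :
    1 ≤ hM.eigenvalues i := by
  have h := hM.eigenvalues_eq i
  set v : Fin d → ℝ := ⇑(hM.eigenvectorBasis i) with hv
  have hnorm : ‖hM.eigenvectorBasis i‖ = 1 := hM.eigenvectorBasis.orthonormal.1 i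
  have hvv : dotProduct v v = 1 := by
    have := EuclideanSpace.norm_eq (hM.eigenvectorBasis i)
    rw [hnorm] at this
    have h2 : (1:ℝ) = Real.sqrt (∑ k, ‖v k‖^2) := this
    have h3 : ∑ k, (v k)^2 = 1 := by
      have := congrArg (fun t : ℝ => t^2) h2
      simp only [one_pow] at this
      rw [Real.sq_sqrt (by positivity)] at this
      simp only [Real.norm_eq_abs, sq_abs] at this
      exact this.symm
    simp only [dotProduct, ← h3]
    exact Finset.sum_congr rfl (fun k _ => by ring)
  have hpos : 0 ≤ dotProduct v (P.mulVec v) := by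
    have := hP.dotProduct_mulVec_nonneg v
    simpa using this
  rw [h, hMP]
  simp only [add_mulVec, one_mulVec, dotProduct_add, star_trivial]
  rw [hvv]
  simpa using hpos

end Corollary21Aux



open MeasureTheory
open Corollary21Aux

/-- **Corollary 2.1, end-to-end bound.** For `δ` with Frobenius norm
`‖δ‖₂ ≤ Δ` and `δWᵀ` symmetric positive semidefinite, with `σ_1 ≤ … ≤ σ_d` the eigenvalues
of `Σ_δ⁻¹` (with `σ_d` the largest), the KL divergence between the standard Gaussian `φ`
and the `N(μ_δ, Σ_δ)` density `q_δ` satisfies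
`∫ φ(x)·log(φ(x)/q_δ(x)) dx ≤ ½·[Σᵢ (σ_i − log σ_i) − d + (σ_d/m²)·‖Uᵀe‖₂²·Δ²]`. -/

theorem corollary_2_1_end_to_end (d m de : ℕ) (hd : 0 < d) (hm : 0 < m) (hde : 0 < de)
    (W : Matrix (Fin d) (Fin m) ℝ) (U : Matrix (Fin de) (Fin m) ℝ) (e : Fin de → ℝ)
    (δ : Matrix (Fin d) (Fin m) ℝ) (Δ : ℝ)
    (hδ : frobNorm d m δ ≤ Δ)
    (hpsd : (δ * Wᵀ).PosSemidef)
    (hH : ((SigmaDelta d m W δ)⁻¹).IsHermitian)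
    (σd : ℝ) (hσd : IsGreatest (Set.range hH.eigenvalues) σd) :
    ∫ x : EuclideanSpace ℝ (Fin d),
        stdGaussianDensity d x *
          Real.log (stdGaussianDensity d x /
            gaussianDensity d (muDelta d m de W U e δ) (SigmaDelta d m W δ) x)
      ≤ (1 / 2) * ((∑ i, (hH.eigenvalues i - Real.log (hH.eigenvalues i))) - d +
          (σd / (m : ℝ) ^ 2) *
            ‖((WithLp.equiv 2 _).symm (Uᵀ.mulVec e) : EuclideanSpace ℝ (Fin m))‖ ^ 2 *
            Δ ^ 2) := by
  classical
  have hm0 : ((m : ℝ))⁻¹ ≥ 0 := by positivity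
  set v : Fin m → ℝ := Uᵀ.mulVec e with hv
  set P : Matrix (Fin d) (Fin d) ℝ := (m : ℝ)⁻¹ • (δ * Wᵀ) with hPdef
  have hPpsd : P.PosSemidef := by
    refine Matrix.PosSemidef.of_dotProduct_mulVec_nonneg ?_ ?_
    · show Pᴴ = P
      rw [hPdef, Matrix.conjTranspose_smul]
      rw [hpsd.1]
      norm_num
    · intro x
      have h := hpsd.dotProduct_mulVec_nonneg x
      rw [hPdef, Matrix.smul_mulVec, dotProduct_smul]
      exact smul_nonneg hm0 h
  set A : Matrix (Fin d) (Fin d) ℝ := 1 + P with hAdef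
  have hApd : A.PosDef := Matrix.PosDef.add_posSemidef Matrix.PosDef.one hPpsd
  have hAdet : IsUnit A.det := hApd.det_pos.ne'.isUnit
  set S : Matrix (Fin d) (Fin d) ℝ := SigmaDelta d m W δ with hSdef
  have hSA : S = A⁻¹ := rfl
  have hSinv : S⁻¹ = A := by rw [hSA, Matrix.nonsing_inv_nonsing_inv A hAdet]
  have hSpd : S.PosDef := by rw [hSA]; exact hApd.inv
  have hSdet : 0 < S.det := hSpd.det_pos
  -- eigenvalues facts
  have heig_pos : ∀ i, 0 < hH.eigenvalues i := by
    have h : ((SigmaDelta d m W δ)⁻¹).PosDef := by rw [hSinv]; exact hApd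
    exact fun i => h.eigenvalues_pos i
  have heig_ge1 : ∀ i, 1 ≤ hH.eigenvalues i :=
    fun i => eigenvalue_ge_one hH P hPpsd hSinv i
  have hσd_ge1 : 1 ≤ σd := by
    obtain ⟨i, hi⟩ := hσd.1
    rw [← hi]; exact heig_ge1 i
  have htrace : ∑ i, A i i = ∑ i, hH.eigenvalues i := by
    calc ∑ i, A i i = A.trace := by rw [Matrix.trace]; rfl
      _ = ((SigmaDelta d m W δ)⁻¹).trace := by rw [hSinv]
      _ = ∑ i, hH.eigenvalues i := trace_eq_sum_eigenvalues hH
  have hdet : A.det = ∏ i, hH.eigenvalues i := by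
    calc A.det = ((SigmaDelta d m W δ)⁻¹).det := by rw [hSinv]
      _ = ∏ i, hH.eigenvalues i := by simpa using hH.det_eq_prod_eigenvalues
  have hlogdet : Real.log A.det = ∑ i, Real.log (hH.eigenvalues i) := by
    rw [hdet]
    exact Real.log_prod (fun i _ => (heig_pos i).ne')
  set δu : Fin d → ℝ := deltaU d m de U e δ with hδu
  set y : Fin d → ℝ := S.mulVec δu with hy
  set μv : Fin d → ℝ := fun i => -((m:ℝ)⁻¹ * y i) with hμv
  set cst : ℝ := -(1/2) * Real.log A.det with hcst
  -- the exact value of the integral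
  have hval : (∫ x : EuclideanSpace ℝ (Fin d),
      stdGaussianDensity d x * Real.log (stdGaussianDensity d x /
        gaussianDensity d (muDelta d m de W U e δ) (SigmaDelta d m W δ) x))
      = cst + (1/2) * (∑ i, ∑ j, A i j * (μv i * μv j + if i = j then 1 else 0))
        - (1/2) * d := by
    have hmp := (EuclideanSpace.volume_preserving_symm_measurableEquiv_toLp (Fin d)).symm
    have hpoint : ∀ yv : Fin d → ℝ,
        stdGaussianDensity d ((MeasurableEquiv.toLp 2 (Fin d → ℝ)) yv) *
          Real.log (stdGaussianDensity d ((MeasurableEquiv.toLp 2 (Fin d → ℝ)) yv) /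
            gaussianDensity d (muDelta d m de W U e δ) (SigmaDelta d m W δ)
              ((MeasurableEquiv.toLp 2 (Fin d → ℝ)) yv))
        = (∏ k, stdg (yv k)) * (cst
            + (1/2) * (∑ i, ∑ j, A i j * ((yv i - μv i) * (yv j - μv j)))
            - (1/2) * ∑ i, (yv i)^2) := by
      intro yv
      set x : EuclideanSpace ℝ (Fin d) := (MeasurableEquiv.toLp 2 (Fin d → ℝ)) yv
        with hxdef
      have hxk : ∀ k, x k = yv k := fun k => rfl
      have hnormx : ‖x‖^2 = ∑ k, (yv k)^2 := by
        rw [EuclideanSpace.norm_eq, Real.sq_sqrt (by positivity)]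
        exact Finset.sum_congr rfl (fun k _ => by rw [hxk, Real.norm_eq_abs, sq_abs])
      have hphi : stdGaussianDensity d x = ∏ k, stdg (yv k) := by
        unfold stdGaussianDensity stdg
        rw [hnormx, Finset.prod_mul_distrib, Finset.prod_const, Finset.card_univ,
          Fintype.card_fin, ← Real.exp_sum]
        congr 1
        · rw [← Real.rpow_natCast ((2*π) ^ (-(1:ℝ)/2)) d, ← Real.rpow_mul (by positivity)]
          congr 1
          push_cast
          ring
        · congr 1
          rw [← Finset.sum_neg_distrib, ← Finset.sum_div]
      have hφpos : 0 < stdGaussianDensity d x := by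
        unfold stdGaussianDensity
        positivity
      have hqpos : 0 < gaussianDensity d (muDelta d m de W U e δ) (SigmaDelta d m W δ) x := by
        unfold gaussianDensity
        apply mul_pos (mul_pos _ _) (Real.exp_pos _)
        · positivity
        · exact Real.rpow_pos_of_pos hSdet _
      have hsub : ∀ i, (x - muDelta d m de W U e δ) i = yv i - μv i := by
        intro i
        unfold muDelta
        simp [hxk, hμv, hy, hδu, hSdef]
      have hinner : ⟪x - muDelta d m de W U e δ,
          ((WithLp.equiv 2 _).symm ((SigmaDelta d m W δ)⁻¹.mulVec
            (x - muDelta d m de W U e δ)) : EuclideanSpace ℝ (Fin d))⟫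
          = ∑ i, ∑ j, A i j * ((yv i - μv i) * (yv j - μv j)) := by
        rw [PiLp.inner_apply]
        simp only [RCLike.inner_apply, starRingEnd_apply, star_trivial]
        have : ∀ i, (x - muDelta d m de W U e δ) i *
            ((WithLp.equiv 2 _).symm ((SigmaDelta d m W δ)⁻¹.mulVec
              (x - muDelta d m de W U e δ)) : EuclideanSpace ℝ (Fin d)) i
            = ∑ j, A i j * ((yv i - μv i) * (yv j - μv j)) := by
          intro i
          rw [WithLp.equiv_symm_apply, PiLp.toLp_apply]
          have hmv : ((SigmaDelta d m W δ)⁻¹.mulVec (x - muDelta d m de W U e δ)) i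
              = ∑ j, A i j * (yv j - μv j) := by
            have hSS : (SigmaDelta d m W δ)⁻¹ = A := hSinv
            rw [hSS, Matrix.mulVec, dotProduct]
            exact Finset.sum_congr rfl (fun j _ => by exact congrArg (A i j * ·) (hsub j))
          refine (congrArg₂ (· * ·) (hsub i) hmv).trans ?_
          rw [Finset.mul_sum]
          exact Finset.sum_congr rfl (fun j _ => by ring)
        exact Finset.sum_congr rfl (fun i _ => (mul_comm _ _).trans (this i))
      have hlog : Real.log (stdGaussianDensity d x /
          gaussianDensity d (muDelta d m de W U e δ) (SigmaDelta d m W δ) x)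
          = cst + (1/2) * (∑ i, ∑ j, A i j * ((yv i - μv i) * (yv j - μv j)))
            - (1/2) * ∑ i, (yv i)^2 := by
        rw [Real.log_div hφpos.ne' hqpos.ne']
        unfold stdGaussianDensity gaussianDensity
        rw [Real.log_mul (by positivity) (Real.exp_ne_zero _), Real.log_exp]
        rw [Real.log_mul (by positivity : ((2 * π) ^ (-(d:ℝ)/2) *
            (SigmaDelta d m W δ).det ^ (-(1:ℝ)/2) : ℝ) ≠ 0) (Real.exp_ne_zero _)]
        rw [Real.log_exp]
        rw [Real.log_mul (by positivity) (by positivity :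
          ((SigmaDelta d m W δ).det ^ (-(1:ℝ)/2) : ℝ) ≠ 0)]
        rw [show (SigmaDelta d m W δ).det = (A.det)⁻¹ from by
          rw [← hSdef, hSA, Matrix.det_nonsing_inv, Ring.inverse_eq_inv]]
        rw [Real.log_rpow (inv_pos.mpr hApd.det_pos), Real.log_inv]
        rw [hnormx, hinner, hcst]
        ring
      rw [hlog, hphi]
    calc (∫ x : EuclideanSpace ℝ (Fin d),
        stdGaussianDensity d x * Real.log (stdGaussianDensity d x /
          gaussianDensity d (muDelta d m de W U e δ) (SigmaDelta d m W δ) x))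
        = ∫ yv : Fin d → ℝ,
            stdGaussianDensity d ((MeasurableEquiv.toLp 2 (Fin d → ℝ)) yv) *
              Real.log (stdGaussianDensity d ((MeasurableEquiv.toLp 2 (Fin d → ℝ)) yv) /
                gaussianDensity d (muDelta d m de W U e δ) (SigmaDelta d m W δ)
                  ((MeasurableEquiv.toLp 2 (Fin d → ℝ)) yv)) :=
          (hmp.integral_comp (MeasurableEquiv.measurableEmbedding _) _).symm
      _ = ∫ yv : Fin d → ℝ, (∏ k, stdg (yv k)) * (cst
            + (1/2) * (∑ i, ∑ j, A i j * ((yv i - μv i) * (yv j - μv j)))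
            - (1/2) * ∑ i, (yv i)^2) :=
          integral_congr_ae (Filter.Eventually.of_forall hpoint)
      _ = cst + (1/2) * (∑ i, ∑ j, A i j * (μv i * μv j + if i = j then 1 else 0))
          - (1/2) * d := key_integral d A μv cst
  -- the quadratic-form bound
  have hquad : ∑ i, ∑ j, A i j * (μv i * μv j)
      ≤ (σd / (m:ℝ)^2) * ‖((WithLp.equiv 2 _).symm v : EuclideanSpace ℝ (Fin m))‖^2 * Δ^2 := by
    have hAy : A.mulVec y = δu := by
      rw [hy, Matrix.mulVec_mulVec, hSA, Matrix.mul_nonsing_inv A hAdet, Matrix.one_mulVec]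
    -- quadratic form as dot products
    have hform : ∑ i, ∑ j, A i j * (μv i * μv j)
        = ((m:ℝ)⁻¹)^2 * dotProduct y (A.mulVec y) := by
      have h1 : ∀ i, ∑ j, A i j * (μv i * μv j)
          = μv i * (A.mulVec μv) i := by
        intro i
        rw [Matrix.mulVec, dotProduct, Finset.mul_sum]
        exact Finset.sum_congr rfl (fun j _ => by ring)
      rw [Finset.sum_congr rfl (fun i _ => h1 i)]
      have hμy : μv = (-(m:ℝ)⁻¹) • y := by
        funext i
        simp [hμv]
      rw [hμy, Matrix.mulVec_smul]
      rw [show ∑ i, ((-(m:ℝ)⁻¹) • y) i * ((-(m:ℝ)⁻¹) • A.mulVec y) i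
          = ((m:ℝ)⁻¹)^2 * ∑ i, y i * (A.mulVec y) i from by
        rw [Finset.mul_sum]
        refine Finset.sum_congr rfl (fun i _ => ?_)
        simp only [Pi.smul_apply, smul_eq_mul]
        ring]
      rfl
    -- y ⬝ A y ≤ δu ⬝ δu
    have hbound1 : dotProduct y (A.mulVec y) ≤ dotProduct δu δu := by
      set z : Fin d → ℝ := P.mulVec y with hz
      have hAyz : A.mulVec y = y + z := by
        rw [hAdef, Matrix.add_mulVec, Matrix.one_mulVec]
      have hyz : 0 ≤ dotProduct y z := by
        have := hPpsd.dotProduct_mulVec_nonneg y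
        simpa using this
      have hzz : 0 ≤ dotProduct z z :=
        Finset.sum_nonneg (fun i _ => mul_self_nonneg _)
      rw [← hAy, hAyz]
      simp only [dotProduct_add, add_dotProduct]
      have hcomm : dotProduct z y = dotProduct y z := dotProduct_comm z y
      linarith
    -- δu ⬝ δu ≤ frob² * Σ v²
    have hbound2 : dotProduct δu δu ≤ (∑ i, ∑ j, δ i j ^ 2) * (∑ j, v j ^ 2) := by
      have hδuv : δu = δ.mulVec v := rfl
      rw [hδuv, dotProduct]
      have h1 : ∀ i, δ.mulVec v i * δ.mulVec v i ≤ (∑ j, δ i j ^ 2) * (∑ j, v j ^ 2) := by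
        intro i
        have := Finset.sum_mul_sq_le_sq_mul_sq Finset.univ (δ i) v
        calc δ.mulVec v i * δ.mulVec v i = (∑ j, δ i j * v j) ^ 2 := by
              rw [Matrix.mulVec, dotProduct]; ring
          _ ≤ (∑ j, δ i j ^ 2) * (∑ j, v j ^ 2) := this
      calc ∑ i, δ.mulVec v i * δ.mulVec v i ≤ ∑ i, (∑ j, δ i j ^ 2) * (∑ j, v j ^ 2) :=
            Finset.sum_le_sum (fun i _ => h1 i)
        _ = (∑ i, ∑ j, δ i j ^ 2) * (∑ j, v j ^ 2) := by rw [Finset.sum_mul]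
    have hfrob : (∑ i, ∑ j, δ i j ^ 2) ≤ Δ^2 := by
      have h0 : (0:ℝ) ≤ ∑ i, ∑ j, δ i j ^ 2 := by positivity
      calc (∑ i, ∑ j, δ i j ^ 2) = (Real.sqrt (∑ i, ∑ j, δ i j ^ 2))^2 :=
            (Real.sq_sqrt h0).symm
        _ ≤ Δ^2 := by
            apply pow_le_pow_left₀ (Real.sqrt_nonneg _) hδ
    have hnorm : ‖((WithLp.equiv 2 _).symm v : EuclideanSpace ℝ (Fin m))‖^2 = ∑ j, v j ^ 2 := by
      rw [EuclideanSpace.norm_eq]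
      rw [Real.sq_sqrt (by positivity)]
      refine Finset.sum_congr rfl (fun j _ => ?_)
      rw [WithLp.equiv_symm_apply, PiLp.toLp_apply]
      rw [Real.norm_eq_abs, sq_abs]
    have hvv : (0:ℝ) ≤ ∑ j, v j ^ 2 := by positivity
    have hstep : dotProduct y (A.mulVec y) ≤ Δ^2 * (∑ j, v j ^ 2) := by
      calc dotProduct y (A.mulVec y) ≤ dotProduct δu δu := hbound1
        _ ≤ (∑ i, ∑ j, δ i j ^ 2) * (∑ j, v j ^ 2) := hbound2
        _ ≤ Δ^2 * (∑ j, v j ^ 2) := mul_le_mul_of_nonneg_right hfrob hvv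
    rw [hform, hnorm]
    have hinv2 : (0:ℝ) ≤ ((m:ℝ)⁻¹)^2 := by positivity
    calc ((m:ℝ)⁻¹)^2 * dotProduct y (A.mulVec y)
        ≤ ((m:ℝ)⁻¹)^2 * (Δ^2 * (∑ j, v j ^ 2)) := mul_le_mul_of_nonneg_left hstep hinv2
      _ ≤ σd * (((m:ℝ)⁻¹)^2 * (Δ^2 * (∑ j, v j ^ 2))) :=
          le_mul_of_one_le_left (by positivity) hσd_ge1
      _ = σd / (m:ℝ)^2 * (∑ j, v j ^ 2) * Δ^2 := by
          rw [div_eq_mul_inv, ← inv_pow]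
          ring
  rw [hval]
  have hsplit : ∑ i, ∑ j, A i j * (μv i * μv j + if i = j then 1 else 0)
      = (∑ i, ∑ j, A i j * (μv i * μv j)) + ∑ i, A i i := by
    rw [← Finset.sum_add_distrib]
    refine Finset.sum_congr rfl (fun i _ => ?_)
    have : ∀ j, A i j * (μv i * μv j + if i = j then 1 else 0)
        = A i j * (μv i * μv j) + if i = j then A i j else 0 := by
      intro j
      by_cases h : i = j <;> simp [h] <;> ring
    rw [Finset.sum_congr rfl (fun j _ => this j), Finset.sum_add_distrib,
      Finset.sum_ite_eq Finset.univ i (fun j => A i j)]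
    simp
  rw [hsplit]
  have hsumsub : ∑ i, (hH.eigenvalues i - Real.log (hH.eigenvalues i))
      = (∑ i, hH.eigenvalues i) - ∑ i, Real.log (hH.eigenvalues i) :=
    Finset.sum_sub_distrib _ _
  rw [hsumsub]
  rw [hcst, hlogdet]
  linarith [hquad, htrace]
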